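/- Let p ≥ 1 be an integer and let e_p be a primitive p-th root of unity in ℂ. Then for all nonzero complex numbers x and y, x^p + x^{−p} − y^p − y^{−p} = ∏_{i=1}^{p} ( x + x^{−1} − y·e_p^i − y^{−1}·e_p^{−i} ). -/

import Mathlib

open Finset Polynomial

theorem stmt1 (p : ℕ) (hp : 1 ≤ p) (e : ℂ) (he : IsPrimitiveRoot e p)
    (x y : ℂ) (hx : x ≠ 0) (hy : y ≠ 0) :
    x ^ p + (x ^ p)⁻¹ - y ^ p - (y ^ p)⁻¹ =
      ∏ i ∈ Finset.Icc 1 p, (x + x⁻¹ - y * e ^ i - y⁻¹ * (e ^ i)⁻¹) := by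
  have hpos : 0 < p := hp
  have horder : orderOf e = p := he.eq_orderOf.symm
  have hinj : Set.InjOn (fun i => e ^ i) (Finset.Icc 1 p) := by
    intro i hi j hj hij
    simp only [Finset.coe_Icc, Set.mem_Icc] at hi hj
    have hmod : i % p = j % p := by
      have h1 : e ^ (i % p) = e ^ (j % p) := by
        rw [← horder, pow_mod_orderOf, pow_mod_orderOf]; exact hij
      exact he.pow_inj (Nat.mod_lt _ hpos) (Nat.mod_lt _ hpos) h1
    obtain ⟨hi1, hi2⟩ := hi
    obtain ⟨hj1, hj2⟩ := hj
    by_cases hip : i = p <;> by_cases hjp : j = p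
    · rw [hip, hjp]
    · have hj' : j < p := lt_of_le_of_ne hj2 hjp
      rw [hip, Nat.mod_self, Nat.mod_eq_of_lt hj'] at hmod; omega
    · have hi' : i < p := lt_of_le_of_ne hi2 hip
      rw [hjp, Nat.mod_self, Nat.mod_eq_of_lt hi'] at hmod; omega
    · have hi' : i < p := lt_of_le_of_ne hi2 hip
      have hj' : j < p := lt_of_le_of_ne hj2 hjp
      rw [Nat.mod_eq_of_lt hi', Nat.mod_eq_of_lt hj'] at hmod; exact hmod
  have himg : (Finset.Icc 1 p).image (fun i => e ^ i) = nthRootsFinset p (1 : ℂ) := by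
    apply Finset.eq_of_subset_of_card_le
    · intro z hz
      simp only [Finset.mem_image] at hz
      obtain ⟨i, _, rfl⟩ := hz
      rw [mem_nthRootsFinset hpos, ← pow_mul, mul_comm, pow_mul, he.pow_eq_one, one_pow]
    · rw [he.card_nthRootsFinset, Finset.card_image_of_injOn hinj, Nat.card_Icc]
      omega
  rw [show (∏ i ∈ Finset.Icc 1 p, (x + x⁻¹ - y * e ^ i - y⁻¹ * (e ^ i)⁻¹)) =
      ∏ z ∈ nthRootsFinset p (1 : ℂ), (x + x⁻¹ - y * z - y⁻¹ * z⁻¹) by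
    rw [← himg, Finset.prod_image (fun i hi j hj => hinj hi hj)]]
  have hfac : ∀ z ∈ nthRootsFinset p (1 : ℂ),
      x + x⁻¹ - y * z - y⁻¹ * z⁻¹ = (x - z * y) * ((1 - z * (x * y)) * (-(z * (x * y)))⁻¹) := by
    intro z hz
    have hz0 : z ≠ 0 := ne_zero_of_mem_nthRootsFinset one_ne_zero hz
    field_simp
    ring
  rw [Finset.prod_congr rfl hfac, Finset.prod_mul_distrib, Finset.prod_mul_distrib,
    Finset.prod_inv_distrib]
  have hA := he.pow_sub_pow_eq_prod_sub_mul x y hpos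
  have hB := he.pow_sub_pow_eq_prod_sub_mul 1 (x * y) hpos
  have hC := he.pow_sub_pow_eq_prod_sub_mul 0 (x * y) hpos
  simp only [one_pow] at hB
  simp only [zero_pow hpos.ne', zero_sub] at hC
  rw [← hA, ← hB, ← hC]
  have hxp : x ^ p ≠ 0 := pow_ne_zero _ hx
  have hyp : y ^ p ≠ 0 := pow_ne_zero _ hy
  field_simp
  ring
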